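/- Consider n processes in ℝ^d executing an averaging algorithm: in each round t, x_i(t) = Σ_j w_{ij}(t) x_j(t−1) with nonnegative weights summing to 1, where each round's communication graph is d-broadcastable with broadcasting set M(t) and Σ_{j∈M(t)} w_{ij}(t) ≥ α > 0 for all i. Let P(t) be the convex hull of {x_i(t)}. Then for every round t ≥ 1, vol(P(t)) ≤ (1 − α^d) · vol(P(t−1)). -/

import Mathlib

open MeasureTheory

open Set Pointwise


variable {d : ℕ}

local notation "E" => EuclideanSpace ℝ (Fin d)

lemma key_vol (α : ℝ) (hα : 0 < α) (hα1 : α ≤ 1)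
    (v : E) (hv : v ≠ 0) (c : ℝ)
    (K Q : Set E)
    (hK : Convex ℝ K) (hKc : IsCompact K) (hKne : K.Nonempty)
    (hQ : Convex ℝ Q) (hQK : Q ⊆ K)
    (hQc : ∀ q ∈ Q, (inner ℝ v q : ℝ) = c) :
    volume (α • Q + (1 - α) • K) ≤ ENNReal.ofReal (1 - α ^ d) * volume K := by
  classical
  set h : E → ℝ := fun y => (inner ℝ v y : ℝ) with hh
  have hlin : IsLinearMap ℝ h := ⟨fun a b => inner_add_right v a b, fun r a => real_inner_smul_right v a r⟩
  have hcont : Continuous h := by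
    simpa [hh] using (innerSL ℝ v).continuous
  obtain ⟨pp, hppK, hppmax⟩ := hKc.exists_isMaxOn hKne hcont.continuousOn
  obtain ⟨pm, hpmK, hpmmin⟩ := hKc.exists_isMinOn hKne hcont.continuousOn
  set b := h pp with hb
  set a := h pm with ha
  have hbK : ∀ y ∈ K, h y ≤ b := hppmax
  have haK : ∀ y ∈ K, a ≤ h y := hpmmin
  have hab : a ≤ b := haK pp hppK
  set T : Set E := α • Q + (1 - α) • K with hT
  have hTconv : Convex ℝ T := (hQ.smul α).add (hK.smul (1 - α))
  have hTK : T ⊆ K := by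
    rintro _ ⟨_, ⟨q, hq, rfl⟩, _, ⟨k, hk, rfl⟩, rfl⟩
    exact hK (hQK hq) hk hα.le (by linarith) (by ring)
  have hcompute : ∀ (r s : ℝ) (y z : E), h (r • y + s • z) = r * h y + s * h z := by
    intro r s y z
    rw [hlin.map_add, hlin.map_smul, hlin.map_smul, smul_eq_mul, smul_eq_mul]
  have hTle : ∀ y ∈ T, h y ≤ α * c + (1 - α) * b := by
    rintro _ ⟨_, ⟨q, hq, rfl⟩, _, ⟨k, hk, rfl⟩, rfl⟩
    rw [hcompute]
    have h1 : h q = c := hQc q hq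
    have := hbK k hk
    nlinarith
  have hTge : ∀ y ∈ T, α * c + (1 - α) * a ≤ h y := by
    rintro _ ⟨_, ⟨q, hq, rfl⟩, _, ⟨k, hk, rfl⟩, rfl⟩
    rw [hcompute]
    have h1 : h q = c := hQc q hq
    have := haK k hk
    nlinarith
  set U : Set E := K ∩ {y | c < h y} with hU
  set L : Set E := K ∩ {y | h y < c} with hL
  set Sp : Set E := AffineMap.homothety pp α '' U with hSp
  set Sm : Set E := AffineMap.homothety pm α '' L with hSm
  have hhom : ∀ (z k : E), AffineMap.homothety z α k = α • k + (1 - α) • z := by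
    intro z k
    simp only [AffineMap.homothety_apply, vsub_eq_sub, vadd_eq_add, smul_sub, sub_smul, one_smul]
    module
  have hSpK : Sp ⊆ K := by
    rintro _ ⟨k, ⟨hkK, _⟩, rfl⟩
    rw [hhom]
    exact hK hkK hppK hα.le (by linarith) (by ring)
  have hSmK : Sm ⊆ K := by
    rintro _ ⟨k, ⟨hkK, _⟩, rfl⟩
    rw [hhom]
    exact hK hkK hpmK hα.le (by linarith) (by ring)
  have hSpgt : ∀ y ∈ Sp, α * c + (1 - α) * b < h y := by
    rintro _ ⟨k, ⟨hkK, hkc⟩, rfl⟩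
    rw [hhom, hcompute]
    have : c < h k := hkc
    nlinarith
  have hSmlt : ∀ y ∈ Sm, h y < α * c + (1 - α) * a := by
    rintro _ ⟨k, ⟨hkK, hkc⟩, rfl⟩
    rw [hhom, hcompute]
    have : h k < c := hkc
    nlinarith
  have hd1 : Disjoint T Sp := by
    rw [Set.disjoint_left]
    intro y hyT hySp
    exact absurd (hTle y hyT) (not_le.mpr (hSpgt y hySp))
  have hd2 : Disjoint T Sm := by
    rw [Set.disjoint_left]
    intro y hyT hySm
    exact absurd (hTge y hyT) (not_le.mpr (hSmlt y hySm))
  have hd3 : Disjoint Sp Sm := by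
    rw [Set.disjoint_left]
    intro y hyp hym
    have h1 := hSpgt y hyp
    have h2 := hSmlt y hym
    nlinarith
  have hSpconv : Convex ℝ Sp := (hK.inter (convex_halfSpace_gt hlin c)).affine_image _
  have hSmconv : Convex ℝ Sm := (hK.inter (convex_halfSpace_lt hlin c)).affine_image _
  -- the hyperplane has measure zero
  have hplane : volume {y : E | h y = c} = 0 := by
    set A : AffineSubspace ℝ E :=
      { carrier := {y : E | h y = c}
        smul_vsub_vadd_mem' := by
          intro r p1 p2 p3 h1 h2 h3
          simp only [Set.mem_setOf_eq] at h1 h2 h3 ⊢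
          simp only [vsub_eq_sub, vadd_eq_add, hh, inner_add_right, inner_sub_right,
            real_inner_smul_right] at h1 h2 h3 ⊢
          rw [h1, h2, h3]
          ring } with hAdef
    have hAne : A ≠ ⊤ := by
      intro htop
      have h0 : (0 : E) ∈ A := htop ▸ AffineSubspace.mem_top ℝ E 0
      have hvA : v ∈ A := htop ▸ AffineSubspace.mem_top ℝ E v
      have h0' : h 0 = c := h0
      have hv' : h v = c := hvA
      rw [hh] at h0' hv'
      simp only [inner_zero_right] at h0'
      rw [← h0'] at hv'
      exact hv (inner_self_eq_zero.mp hv')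
    exact Measure.addHaar_affineSubspace (volume : Measure E) A hAne
  have hUvol : volume Sp = ENNReal.ofReal (α ^ d) * volume U := by
    rw [hSp, Measure.addHaar_image_homothety, finrank_euclideanSpace_fin,
      abs_of_nonneg (pow_nonneg hα.le d)]
  have hLvol : volume Sm = ENNReal.ofReal (α ^ d) * volume L := by
    rw [hSm, Measure.addHaar_image_homothety, finrank_euclideanSpace_fin,
      abs_of_nonneg (pow_nonneg hα.le d)]
  have hKUL : volume K ≤ volume U + volume L := by
    have hsub : K ⊆ U ∪ L ∪ {y : E | h y = c} := by
      intro y hy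
      rcases lt_trichotomy (h y) c with h1 | h1 | h1
      · exact Or.inl (Or.inr ⟨hy, h1⟩)
      · exact Or.inr h1
      · exact Or.inl (Or.inl ⟨hy, h1⟩)
    calc volume K ≤ volume (U ∪ L ∪ {y : E | h y = c}) := measure_mono hsub
      _ ≤ volume (U ∪ L) + volume {y : E | h y = c} := measure_union_le _ _
      _ = volume (U ∪ L) := by rw [hplane, add_zero]
      _ ≤ volume U + volume L := measure_union_le _ _
  have hadd : volume T + volume Sp + volume Sm ≤ volume K := by
    have e1 : volume (T ∪ Sp ∪ Sm) = volume T + volume Sp + volume Sm := by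
      rw [measure_union₀ (hSmconv.nullMeasurableSet (μ := volume))
          (hd2.union_left hd3).aedisjoint,
        measure_union₀ (hSpconv.nullMeasurableSet (μ := volume)) hd1.aedisjoint]
    rw [← e1]
    exact measure_mono (Set.union_subset (Set.union_subset hTK hSpK) hSmK)
  have hKfin : volume K ≠ ⊤ := hKc.measure_lt_top.ne
  have hchain : volume T + ENNReal.ofReal (α ^ d) * volume K ≤ volume K := by
    calc volume T + ENNReal.ofReal (α ^ d) * volume K
        ≤ volume T + ENNReal.ofReal (α ^ d) * (volume U + volume L) := by
          exact add_le_add_right (mul_le_mul_right hKUL _) _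
      _ = volume T + volume Sp + volume Sm := by
          rw [mul_add, ← hUvol, ← hLvol, add_assoc]
      _ ≤ volume K := hadd
  have hfinal : volume T ≤ volume K - ENNReal.ofReal (α ^ d) * volume K :=
    ENNReal.le_sub_of_add_le_right (ENNReal.mul_ne_top ENNReal.ofReal_ne_top hKfin) hchain
  refine hfinal.trans (le_of_eq ?_)
  rw [ENNReal.ofReal_sub _ (pow_nonneg hα.le d), ENNReal.ofReal_one,
    ENNReal.sub_mul (fun _ _ => hKfin), one_mul]

theorem averaging_volume_contraction {d n : ℕ}
    (x : ℕ → Fin n → EuclideanSpace ℝ (Fin d))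
    (w : ℕ → Fin n → Fin n → ℝ)
    (M : ℕ → Finset (Fin n))
    (α : ℝ) (hα : 0 < α)
    (hMcard : ∀ t, (M t).card ≤ d)
    (hMne : ∀ t, (M t).Nonempty)
    (hwnonneg : ∀ t i j, 0 ≤ w t i j)
    (hwsum : ∀ t i, ∑ j, w t i j = 1)
    (hbw : ∀ t : ℕ, ∀ i, α ≤ ∑ j ∈ M (t + 1), w (t + 1) i j)
    (hupd : ∀ t : ℕ, ∀ i, x (t + 1) i = ∑ j, w (t + 1) i j • x t j) :
    ∀ t : ℕ,
      volume (convexHull ℝ (Set.range (x (t + 1)))) ≤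
        ENNReal.ofReal (1 - α ^ d) * volume (convexHull ℝ (Set.range (x t))) := by
  intro t
  classical
  obtain ⟨j0, hj0⟩ := hMne (t + 1)
  set K := convexHull ℝ (Set.range (x t)) with hKdef
  have hKconv : Convex ℝ K := convex_convexHull ℝ _
  have hKcompact : IsCompact K := (Set.finite_range (x t)).isCompact_convexHull ℝ
  have hxK : ∀ j, x t j ∈ K := fun j => subset_convexHull ℝ _ ⟨j, rfl⟩
  have hKne : K.Nonempty := ⟨x t j0, hxK j0⟩
  set Q := convexHull ℝ (x t '' ↑(M (t + 1))) with hQdef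
  have hQconv : Convex ℝ Q := convex_convexHull ℝ _
  have hQK : Q ⊆ K := convexHull_min (by rintro _ ⟨j, hj, rfl⟩; exact hxK j) hKconv
  have hα1 : α ≤ 1 := by
    have h1 := hbw t j0
    have h2 : ∑ j ∈ M (t + 1), w (t + 1) j0 j ≤ ∑ j, w (t + 1) j0 j :=
      Finset.sum_le_sum_of_subset_of_nonneg (Finset.subset_univ _)
        (fun j _ _ => hwnonneg _ _ _)
    rw [hwsum (t + 1) j0] at h2
    linarith
  -- find a normal vector v to the affine span of the M-points
  set g : Fin n → EuclideanSpace ℝ (Fin d) := fun j => x t j - x t j0 with hg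
  set s : Finset (EuclideanSpace ℝ (Fin d)) := ((M (t + 1)).erase j0).image g with hs
  set W : Submodule ℝ (EuclideanSpace ℝ (Fin d)) := Submodule.span ℝ (s : Set _) with hW
  have hWrank : Module.finrank ℝ W < d := by
    have h1 : Module.finrank ℝ W ≤ s.card := finrank_span_finset_le_card s
    have h2 : s.card ≤ ((M (t + 1)).erase j0).card := Finset.card_image_le
    have h3 : ((M (t + 1)).erase j0).card = (M (t + 1)).card - 1 :=
      Finset.card_erase_of_mem hj0
    have h4 := hMcard (t + 1)
    have h5 : 0 < (M (t + 1)).card := Finset.card_pos.mpr (hMne (t + 1))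
    omega
  have hWne : W ≠ ⊤ := by
    intro htop
    rw [htop, finrank_top, finrank_euclideanSpace_fin] at hWrank
    exact lt_irrefl _ hWrank
  have hWorth : Wᗮ ≠ ⊥ := fun h => hWne (Submodule.orthogonal_eq_bot_iff.mp h)
  obtain ⟨v, hvW, hv0⟩ := Submodule.exists_mem_ne_zero_of_ne_bot hWorth
  set c : ℝ := inner ℝ v (x t j0) with hc
  have hMc : ∀ j ∈ M (t + 1), (inner ℝ v (x t j) : ℝ) = c := by
    intro j hj
    have hgW : g j ∈ W := by
      by_cases hjj : j = j0
      · have : g j = 0 := by rw [hg]; simp [hjj]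
        rw [this]; exact W.zero_mem
      · exact Submodule.subset_span
          (Finset.mem_coe.mpr (Finset.mem_image_of_mem g (Finset.mem_erase.mpr ⟨hjj, hj⟩)))
    have h1 : (inner ℝ (g j) v : ℝ) = 0 := (Submodule.mem_orthogonal W v).mp hvW (g j) hgW
    have h2 : (inner ℝ v (g j) : ℝ) = 0 := by rw [real_inner_comm]; exact h1
    rw [hg] at h2
    simp only [inner_sub_right] at h2
    have := sub_eq_zero.mp h2
    rw [hc, this]
  have hQc : ∀ q ∈ Q, (inner ℝ v q : ℝ) = c := by
    intro q hq
    have hsub : Q ⊆ {y | (inner ℝ v y : ℝ) = c} :=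
      convexHull_min (by rintro _ ⟨j, hj, rfl⟩; exact hMc j hj)
        (convex_hyperplane ⟨fun a b => inner_add_right v a b,
          fun r a => real_inner_smul_right v a r⟩ c)
    exact hsub hq
  -- the new points lie in α • Q + (1 - α) • K
  have hsub : Set.range (x (t + 1)) ⊆ α • Q + (1 - α) • K := by
    rintro _ ⟨i, rfl⟩
    rw [hupd t i]
    set β := ∑ j ∈ M (t + 1), w (t + 1) i j with hβ
    set γ := ∑ j ∈ Finset.univ \ M (t + 1), w (t + 1) i j with hγ
    have hβα : α ≤ β := hbw t i
    have hβpos : 0 < β := lt_of_lt_of_le hα hβα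
    have hβγ : γ + β = 1 := by
      rw [hγ, hβ, Finset.sum_sdiff (Finset.subset_univ (M (t + 1)))]
      exact hwsum (t + 1) i
    have hγ0 : 0 ≤ γ := Finset.sum_nonneg fun j _ => hwnonneg _ _ _
    set m := (M (t + 1)).centerMass (w (t + 1) i) (x t) with hm
    have hmQ : m ∈ Q :=
      Finset.centerMass_mem_convexHull _ (fun j _ => hwnonneg _ _ _) hβpos
        (fun j hj => Set.mem_image_of_mem _ hj)
    have hmsum : ∑ j ∈ M (t + 1), w (t + 1) i j • x t j = β • m := by
      rw [hm, Finset.centerMass, smul_smul, mul_inv_cancel₀ hβpos.ne', one_smul]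
    by_cases hγzero : γ = 0
    · have hallzero : ∀ j ∈ Finset.univ \ M (t + 1), w (t + 1) i j = 0 :=
        (Finset.sum_eq_zero_iff_of_nonneg (fun j _ => hwnonneg _ _ _)).mp hγzero
      have hrest : ∑ j ∈ Finset.univ \ M (t + 1), w (t + 1) i j • x t j = 0 :=
        Finset.sum_eq_zero fun j hj => by rw [hallzero j hj, zero_smul]
      have hβ1 : β = 1 := by linarith
      have hx1 : ∑ j, w (t + 1) i j • x t j = m := by
        rw [← Finset.sum_sdiff (Finset.subset_univ (M (t + 1))), hrest, hmsum, zero_add,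
          hβ1, one_smul]
      rw [hx1]
      have hmm : m = α • m + (1 - α) • m := by module
      rw [hmm]
      exact Set.add_mem_add (Set.smul_mem_smul_set hmQ) (Set.smul_mem_smul_set (hQK hmQ))
    · have hγpos : 0 < γ := lt_of_le_of_ne hγ0 (Ne.symm hγzero)
      set p := (Finset.univ \ M (t + 1)).centerMass (w (t + 1) i) (x t) with hp
      have hpK : p ∈ K := by
        have := Finset.centerMass_mem_convexHull (Finset.univ \ M (t + 1))
          (fun j _ => hwnonneg _ _ _) hγpos (fun j _ => hxK j)
        rwa [hKconv.convexHull_eq] at this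
      have hpsum : ∑ j ∈ Finset.univ \ M (t + 1), w (t + 1) i j • x t j = γ • p := by
        rw [hp, Finset.centerMass, smul_smul, mul_inv_cancel₀ hγpos.ne', one_smul]
      have hsplit : ∑ j, w (t + 1) i j • x t j = β • m + γ • p := by
        rw [← Finset.sum_sdiff (Finset.subset_univ (M (t + 1))), hmsum, hpsum, add_comm]
      have hαlt1 : α < 1 := by linarith
      set k := ((β - α) / (1 - α)) • m + (γ / (1 - α)) • p with hk
      have hkK : k ∈ K := hKconv (hQK hmQ) hpK
        (div_nonneg (by linarith) (by linarith)) (div_nonneg hγ0 (by linarith))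
        (by rw [← add_div, div_eq_one_iff_eq (by linarith : (1:ℝ) - α ≠ 0)]; linarith)
      rw [hsplit]
      have heq : β • m + γ • p = α • m + (1 - α) • k := by
        rw [hk, smul_add, smul_smul, smul_smul]
        have hne : (1 : ℝ) - α ≠ 0 := by linarith
        have e1 : (1 - α) * ((β - α) / (1 - α)) = β - α := by
          rw [mul_comm]; exact div_mul_cancel₀ _ hne
        have e2 : (1 - α) * (γ / (1 - α)) = γ := by
          rw [mul_comm]; exact div_mul_cancel₀ _ hne
        rw [e1, e2, ← add_assoc, ← add_smul, show α + (β - α) = β by ring]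
      rw [heq]
      exact Set.add_mem_add (Set.smul_mem_smul_set hmQ) (Set.smul_mem_smul_set hkK)
  calc volume (convexHull ℝ (Set.range (x (t + 1))))
      ≤ volume (α • Q + (1 - α) • K) :=
        measure_mono (convexHull_min hsub ((hQconv.smul α).add (hKconv.smul (1 - α))))
    _ ≤ ENNReal.ofReal (1 - α ^ d) * volume K :=
        key_vol α hα hα1 v hv0 c K Q hKconv hKcompact hKne hQconv hQK hQc
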